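/- The Green function g_α(x,y) = ∫_0^∞ p_α(t,x,y) dt is finite for some (equivalently, every) pair of distinct x, y ∈ ℚ_p if and only if α < 1; and for 0 < α < 1 and all x ≠ y it is given explicitly by g_α(x,y) = ((1 − p^{−α})/(1 − p^{α−1})) · ‖x−y‖_p^{α−1}. -/

import Mathlib

open MeasureTheory Metric
open scoped ENNReal

/-- The distance distribution function `σ_α(r) = exp(−(p/r)^α)`,
extended by `0` for `r ≤ 0`. -/
noncomputable def padicSigma (p : ℕ) (α : ℝ) (r : ℝ) : ℝ :=
  if r ≤ 0 then 0 else Real.exp (-(((p : ℝ) / r) ^ α))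

/-- The heat kernel `p_α(t,x,y) = ∫_[‖x−y‖_p,∞) μ(B_r(x))⁻¹ dσ_α^t(r)` on `ℚ_p`. -/
noncomputable def padicHeatK (p : ℕ) [Fact p.Prime] [MeasurableSpace ℚ_[p]]
    (μ : Measure ℚ_[p]) (ν : ℝ → Measure ℝ) (t : ℝ) (x y : ℚ_[p]) : ℝ≥0∞ :=
  ∫⁻ r in Set.Ici ‖x - y‖, (μ (closedBall x r))⁻¹ ∂(ν t)

/-- The Green function `g_α(x,y) = ∫_0^∞ p_α(t,x,y) dt` on `ℚ_p`. -/
noncomputable def padicGreen (p : ℕ) [Fact p.Prime] [MeasurableSpace ℚ_[p]]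
    (μ : Measure ℚ_[p]) (ν : ℝ → Measure ℝ) (x y : ℚ_[p]) : ℝ≥0∞ :=
  ∫⁻ t in Set.Ioi (0:ℝ), padicHeatK p μ ν t x y

set_option linter.unusedSectionVars false
set_option linter.unusedVariables false
set_option linter.unnecessarySeqFocus false

section PGAux

/-- `S m = p ^ ((1-m)α)`, so that `σ_α(p^m) = exp (-(S m))`. -/
noncomputable def pgSfun (p : ℕ) (α : ℝ) (m : ℤ) : ℝ := (p:ℝ) ^ (((1:ℝ) - (m:ℝ)) * α)

variable {p : ℕ} [hp : Fact p.Prime]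

lemma pg_cball_eq (x : ℚ_[p]) (k : ℤ) (r : ℝ) (h1 : (p:ℝ)^k ≤ r) (h2 : r < (p:ℝ)^(k+1)) :
    closedBall x r = closedBall x ((p:ℝ)^k) := by
  have hp1 : (1:ℝ) < p := by exact_mod_cast hp.out.one_lt
  ext z
  simp only [mem_closedBall, dist_eq_norm]
  constructor
  · intro h
    rcases eq_or_ne (z - x) 0 with h0 | h0
    · rw [h0, norm_zero]; positivity
    · rw [Padic.norm_eq_zpow_neg_valuation h0] at h ⊢
      have hlt : (p:ℝ) ^ (-(z-x).valuation) < (p:ℝ)^(k+1) := lt_of_le_of_lt h h2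
      have : -(z-x).valuation < k + 1 := by
        exact lt_of_not_ge fun hc => absurd hlt (not_lt.2 (zpow_le_zpow_right₀ hp1.le hc))
      exact zpow_le_zpow_right₀ hp1.le (by omega)
  · intro h; exact h.trans h1

lemma pg_Sfun_pos (α : ℝ) (m : ℤ) : 0 < pgSfun p α m := by
  have : (0:ℝ) < p := by exact_mod_cast hp.out.pos
  exact Real.rpow_pos_of_pos this _

lemma pg_Sfun_lt {α : ℝ} (hα : 0 < α) (m : ℤ) : pgSfun p α (m+1) < pgSfun p α m := by
  have hp1 : (1:ℝ) < p := by exact_mod_cast hp.out.one_lt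
  apply (Real.rpow_lt_rpow_left_iff hp1).2
  push_cast
  nlinarith

lemma pg_sigma_pow_val (α : ℝ) (m : ℤ) :
    padicSigma p α ((p:ℝ)^m) = Real.exp (-(pgSfun p α m)) := by
  have hpR : (0:ℝ) < p := by exact_mod_cast hp.out.pos
  have hpos : (0:ℝ) < (p:ℝ)^m := zpow_pos hpR m
  rw [padicSigma, if_neg (not_le.2 hpos)]
  congr 2
  rw [show (p:ℝ) / (p:ℝ)^m = (p:ℝ)^((1:ℤ) - m) by
    rw [zpow_sub₀ (ne_of_gt hpR), zpow_one]]
  rw [← Real.rpow_intCast (p:ℝ) (1 - m), ← Real.rpow_mul hpR.le]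
  rw [pgSfun]
  push_cast
  try ring_nf

lemma pg_sigma_rpow (α t : ℝ) (m : ℤ) :
    padicSigma p α ((p:ℝ)^m) ^ t = Real.exp (-(pgSfun p α m * t)) := by
  rw [pg_sigma_pow_val (p := p) α m, ← Real.exp_mul, neg_mul]

lemma pg_enn_zpow (m : ℤ) : (p:ℝ≥0∞)^m = ENNReal.ofReal ((p:ℝ)^m) := by
  have hp0 : (0:ℝ) < p := by exact_mod_cast hp.out.pos
  rw [← Real.rpow_intCast (p:ℝ) m, ← ENNReal.ofReal_rpow_of_pos hp0,
    ENNReal.ofReal_natCast, ENNReal.rpow_intCast]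

lemma pg_real_term {α : ℝ} (hα : 0 < α) (K : ℤ) (n : ℕ) :
    (p:ℝ)^(-(K + (n:ℤ))) * ((pgSfun p α (K + (n:ℤ) + 1))⁻¹ - (pgSfun p α (K + (n:ℤ)))⁻¹)
      = (1 - (p:ℝ)^(-α)) * (p:ℝ)^((K:ℝ)*(α-1)) * ((p:ℝ)^(α-1))^n := by
  have hq0 : (0:ℝ) < p := by exact_mod_cast hp.out.pos
  have h1 : (pgSfun p α (K + (n:ℤ) + 1))⁻¹ = (p:ℝ) ^ (-((1 - ((K + (n:ℤ) + 1 : ℤ):ℝ)) * α)) := by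
    rw [pgSfun, ← Real.rpow_neg hq0.le]
  have h2 : (pgSfun p α (K + (n:ℤ)))⁻¹ = (p:ℝ) ^ (-((1 - ((K + (n:ℤ) : ℤ):ℝ)) * α)) := by
    rw [pgSfun, ← Real.rpow_neg hq0.le]
  have h3 : (p:ℝ)^(-(K + (n:ℤ))) = (p:ℝ) ^ (((-(K + (n:ℤ)) : ℤ) : ℝ)) :=
    (Real.rpow_intCast _ _).symm
  have h4 : ((p:ℝ)^(α-1))^n = (p:ℝ) ^ ((α-1) * (n:ℝ)) := by
    rw [← Real.rpow_natCast ((p:ℝ)^(α-1)) n, ← Real.rpow_mul hq0.le]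
  have key : ∀ u v : ℝ, (1 - (p:ℝ)^u) * (p:ℝ)^v = (p:ℝ)^v - (p:ℝ)^(u+v) := by
    intro u v
    rw [sub_mul, one_mul, ← Real.rpow_add hq0]
  rw [h1, h2, h3, h4, mul_sub]
  rw [← Real.rpow_add hq0]
  rw [← Real.rpow_add hq0]
  rw [mul_assoc]
  rw [← Real.rpow_add hq0]
  rw [key]
  congr 1 <;> (congr 1 <;> push_cast <;> ring)

lemma pg_Ici_cover (K : ℤ) :
    Set.Ici ((p:ℝ)^K) = ⋃ n : ℕ, Set.Ico ((p:ℝ)^(K + (n:ℤ))) ((p:ℝ)^(K + (n:ℤ) + 1)) := by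
  have hp1 : (1:ℝ) < p := by exact_mod_cast hp.out.one_lt
  have hp1' : 1 < p := hp.out.one_lt
  ext r
  simp only [Set.mem_Ici, Set.mem_iUnion, Set.mem_Ico]
  constructor
  · intro hr
    have hr0 : 0 < r := lt_of_lt_of_le (zpow_pos (by linarith) K) hr
    set k := Int.log p r with hk
    have h1 : (p:ℝ)^k ≤ r := Int.zpow_log_le_self hp1' hr0
    have h2 : r < (p:ℝ)^(k+1) := Int.lt_zpow_succ_log_self hp1' r
    have hKk : K ≤ k := by
      by_contra hc
      push_neg at hc
      have : (p:ℝ)^(k+1) ≤ (p:ℝ)^K := zpow_le_zpow_right₀ hp1.le (by omega)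
      linarith
    refine ⟨(k - K).toNat, ?_, ?_⟩
    · rwa [show K + ((k - K).toNat : ℤ) = k by omega]
    · rwa [show K + ((k - K).toNat : ℤ) + 1 = k + 1 by omega]
  · rintro ⟨n, h1, h2⟩
    exact le_trans (zpow_le_zpow_right₀ hp1.le (by omega)) h1

lemma pg_integral_exp_neg (a : ℝ) (ha : 0 < a) :
    ∫ t in Set.Ioi (0:ℝ), Real.exp (-(a * t)) = a⁻¹ := by
  have h := integral_exp_neg_mul_rpow one_pos ha
  simp only [Real.rpow_one] at h
  calc ∫ t in Set.Ioi (0:ℝ), Real.exp (-(a * t))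
      = ∫ t in Set.Ioi (0:ℝ), Real.exp (-a * t) := by simp only [neg_mul]
    _ = a ^ (-1/1 : ℝ) * Real.Gamma (1/1 + 1) := h
    _ = a⁻¹ := by
        norm_num [Real.Gamma_two, Real.rpow_neg_one]

lemma pg_lint_exp_diff {a b : ℝ} (ha : 0 < a) (hab : a ≤ b) :
    ∫⁻ t in Set.Ioi (0:ℝ), ENNReal.ofReal (Real.exp (-(a * t)) - Real.exp (-(b * t)))
      = ENNReal.ofReal (a⁻¹ - b⁻¹) := by
  have hb : 0 < b := lt_of_lt_of_le ha hab
  have hia : IntegrableOn (fun t => Real.exp (-(a * t))) (Set.Ioi (0:ℝ)) := by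
    simpa [neg_mul] using exp_neg_integrableOn_Ioi 0 ha
  have hib : IntegrableOn (fun t => Real.exp (-(b * t))) (Set.Ioi (0:ℝ)) := by
    simpa [neg_mul] using exp_neg_integrableOn_Ioi 0 hb
  have hnn : 0 ≤ᵐ[volume.restrict (Set.Ioi (0:ℝ))]
      fun t => Real.exp (-(a * t)) - Real.exp (-(b * t)) := by
    filter_upwards [ae_restrict_mem measurableSet_Ioi] with t ht
    have : a * t ≤ b * t := mul_le_mul_of_nonneg_right hab (le_of_lt ht)
    simp only [Pi.zero_apply, sub_nonneg]
    exact Real.exp_le_exp.2 (by linarith)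
  have key := ofReal_integral_eq_lintegral_ofReal (hia.sub hib) hnn
  simp only [Pi.sub_apply] at key
  rw [← key, integral_sub hia hib, pg_integral_exp_neg a ha, pg_integral_exp_neg b hb]

section meas
variable [MeasurableSpace ℚ_[p]] [BorelSpace ℚ_[p]]
variable (μ : Measure ℚ_[p]) [μ.IsAddHaarMeasure]

lemma pg_meas_cball_eq (x : ℚ_[p]) (s : ℝ) : μ (closedBall x s) = μ (closedBall 0 s) := by
  have : (fun h => x + h) ⁻¹' (closedBall x s) = closedBall 0 s := by
    ext z; simp [mem_closedBall, dist_eq_norm]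
  rw [← this, measure_preimage_add]

lemma pg_cball_decomp (k : ℤ) :
    closedBall (0:ℚ_[p]) ((p:ℝ)^(k+1)) =
      ⋃ j ∈ Finset.range p, closedBall ((j:ℚ_[p]) * (p:ℚ_[p])^(-(k+1))) ((p:ℝ)^k) := by
  have hp0 : (p:ℚ_[p]) ≠ 0 := by exact_mod_cast hp.out.ne_zero
  have hpR : (0:ℝ) < p := by exact_mod_cast hp.out.pos
  have hexp : ∀ m : ℤ, (p:ℝ) ^ (m + -m) = 1 := fun m => by
    rw [add_neg_cancel, zpow_zero]
  ext z
  simp only [Set.mem_iUnion, Finset.mem_range, mem_closedBall, dist_eq_norm, sub_zero,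
    exists_prop]
  constructor
  · intro hz
    set u : ℚ_[p] := z * (p:ℚ_[p])^(k+1) with hu
    have hnu : ‖u‖ ≤ 1 := by
      rw [hu, norm_mul, Padic.norm_p_zpow]
      calc ‖z‖ * (p:ℝ)^(-(k+1)) ≤ (p:ℝ)^(k+1) * (p:ℝ)^(-(k+1)) := by
            apply mul_le_mul_of_nonneg_right hz (by positivity)
        _ = 1 := by rw [← zpow_add₀ (ne_of_gt hpR)]; exact hexp (k+1)
    set U : ℤ_[p] := ⟨u, hnu⟩ with hU
    refine ⟨U.appr 1, by simpa using U.appr_lt 1, ?_⟩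
    have hspec := U.appr_spec 1
    rw [← PadicInt.norm_le_pow_iff_mem_span_pow] at hspec
    have hz' : z = u * (p:ℚ_[p])^(-(k+1)) := by
      rw [hu, mul_assoc, ← zpow_add₀ hp0, add_neg_cancel, zpow_zero, mul_one]
    have key : z - (U.appr 1 : ℚ_[p]) * (p:ℚ_[p])^(-(k+1))
        = (u - (U.appr 1 : ℚ_[p])) * (p:ℚ_[p])^(-(k+1)) := by
      rw [hz']; ring
    rw [key, norm_mul, Padic.norm_p_zpow, neg_neg]
    have hnorm : ‖u - ((U.appr 1 : ℕ) : ℚ_[p])‖ ≤ (p:ℝ)^(-(1:ℤ)) := by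
      have : ((U - (U.appr 1 : ℤ_[p]) : ℤ_[p]) : ℚ_[p]) = u - ((U.appr 1 : ℕ) : ℚ_[p]) := by
        rfl
      rw [← this]
      exact hspec
    calc ‖u - ((U.appr 1:ℕ) : ℚ_[p])‖ * (p:ℝ)^(k+1)
        ≤ (p:ℝ)^(-(1:ℤ)) * (p:ℝ)^(k+1) := by
          apply mul_le_mul_of_nonneg_right hnorm (by positivity)
      _ = (p:ℝ)^k := by
          rw [← zpow_add₀ (ne_of_gt hpR)]
          norm_num
  · rintro ⟨j, hj, hz⟩
    have h1 : ‖z - (j:ℚ_[p]) * (p:ℚ_[p])^(-(k+1))‖ ≤ (p:ℝ)^(k+1) := by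
      refine hz.trans (zpow_le_zpow_right₀ (by exact_mod_cast hp.out.one_lt.le) (by omega))
    have h2 : ‖(j:ℚ_[p]) * (p:ℚ_[p])^(-(k+1))‖ ≤ (p:ℝ)^(k+1) := by
      rw [norm_mul, Padic.norm_p_zpow, neg_neg]
      calc ‖(j:ℚ_[p])‖ * (p:ℝ)^(k+1) ≤ 1 * (p:ℝ)^(k+1) := by
            apply mul_le_mul_of_nonneg_right ?_ (by positivity)
            exact_mod_cast Padic.norm_int_le_one (j:ℤ)
        _ = (p:ℝ)^(k+1) := one_mul _
    calc ‖z‖ = ‖(z - (j:ℚ_[p]) * (p:ℚ_[p])^(-(k+1))) + (j:ℚ_[p]) * (p:ℚ_[p])^(-(k+1))‖ := by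
          ring_nf
      _ ≤ max ‖z - (j:ℚ_[p]) * (p:ℚ_[p])^(-(k+1))‖ ‖(j:ℚ_[p]) * (p:ℚ_[p])^(-(k+1))‖ :=
          Padic.nonarchimedean _ _
      _ ≤ (p:ℝ)^(k+1) := max_le h1 h2

lemma pg_cball_disj (k : ℤ) {i j : ℕ} (hi : i < p) (hj : j < p) (hij : i ≠ j) :
    Disjoint (closedBall ((i:ℚ_[p]) * (p:ℚ_[p])^(-(k+1))) ((p:ℝ)^k))
             (closedBall ((j:ℚ_[p]) * (p:ℚ_[p])^(-(k+1))) ((p:ℝ)^k)) := by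
  have hp1 : (1:ℝ) < p := by exact_mod_cast hp.out.one_lt
  rw [Set.disjoint_left]
  rintro z hzi hzj
  rw [mem_closedBall, dist_eq_norm] at hzi hzj
  have hdiff : ‖(i:ℚ_[p]) * (p:ℚ_[p])^(-(k+1)) - (j:ℚ_[p]) * (p:ℚ_[p])^(-(k+1))‖ ≤ (p:ℝ)^k := by
    have : (i:ℚ_[p]) * (p:ℚ_[p])^(-(k+1)) - (j:ℚ_[p]) * (p:ℚ_[p])^(-(k+1))
        = -((z - (i:ℚ_[p]) * (p:ℚ_[p])^(-(k+1))) - (z - (j:ℚ_[p]) * (p:ℚ_[p])^(-(k+1)))) := by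
      ring
    rw [this, norm_neg]
    rw [sub_eq_add_neg (z - (i:ℚ_[p]) * (p:ℚ_[p])^(-(k+1)))]
    calc ‖(z - (i:ℚ_[p]) * (p:ℚ_[p])^(-(k+1))) + -(z - (j:ℚ_[p]) * (p:ℚ_[p])^(-(k+1)))‖
        ≤ max _ _ := Padic.nonarchimedean _ _
      _ ≤ (p:ℝ)^k := max_le hzi (by rwa [norm_neg])
  have heq : (i:ℚ_[p]) * (p:ℚ_[p])^(-(k+1)) - (j:ℚ_[p]) * (p:ℚ_[p])^(-(k+1))
      = ((i - j : ℤ) : ℚ_[p]) * (p:ℚ_[p])^(-(k+1)) := by push_cast; ring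
  rw [heq, norm_mul, Padic.norm_p_zpow, neg_neg] at hdiff
  have hnd : ¬ ((p:ℤ) ∣ (i - j : ℤ)) := by
    intro hdvd
    have habs : |(i:ℤ) - (j:ℤ)| < (p:ℤ) := by rw [abs_lt]; omega
    rcases Int.eq_zero_of_abs_lt_dvd hdvd habs with h
    omega
  have h1 : ‖((i-j:ℤ) : ℚ_[p])‖ = 1 := by
    have hle := Padic.norm_int_le_one (p := p) (i - j : ℤ)
    have := (Padic.norm_intCast_lt_one_iff (p := p) (k := (i - j : ℤ))).not.2 hnd
    rcases lt_or_eq_of_le hle with h | h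
    · exact absurd h this
    · exact h
  have : (1:ℝ) * (p:ℝ)^(k+1) ≤ (p:ℝ)^k := by rw [h1] at hdiff; linarith
  rw [one_mul] at this
  exact absurd this (not_le.2 (zpow_lt_zpow_right₀ hp1 (by omega)))

lemma pg_meas_step (k : ℤ) :
    μ (closedBall (0:ℚ_[p]) ((p:ℝ)^(k+1))) = p * μ (closedBall (0:ℚ_[p]) ((p:ℝ)^k)) := by
  rw [pg_cball_decomp (p := p) k]
  have hd : Set.PairwiseDisjoint (↑(Finset.range p))
      (fun j : ℕ => closedBall ((j:ℚ_[p]) * (p:ℚ_[p])^(-(k+1))) ((p:ℝ)^k)) := by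
    intro i hi j hj hij
    simp only [Finset.coe_range, Set.mem_Iio] at hi hj
    exact pg_cball_disj k hi hj hij
  rw [measure_biUnion_finset hd (fun j _ => measurableSet_closedBall)]
  calc ∑ j ∈ Finset.range p, μ (closedBall ((j:ℚ_[p]) * (p:ℚ_[p])^(-(k+1))) ((p:ℝ)^k))
      = ∑ _j ∈ Finset.range p, μ (closedBall (0:ℚ_[p]) ((p:ℝ)^k)) :=
        Finset.sum_congr rfl (fun j _ => pg_meas_cball_eq μ _ _)
    _ = p * μ (closedBall (0:ℚ_[p]) ((p:ℝ)^k)) := by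
        rw [Finset.sum_const, Finset.card_range, nsmul_eq_mul]

include hp in
lemma pg_meas_cball_val (hμ1 : μ (closedBall 0 1) = 1) (k : ℤ) :
    μ (closedBall (0:ℚ_[p]) ((p:ℝ)^k)) = (p : ℝ≥0∞)^k := by
  have hpne : (p : ℝ≥0∞) ≠ 0 := by exact_mod_cast hp.out.ne_zero
  have hptop : (p : ℝ≥0∞) ≠ ⊤ := ENNReal.natCast_ne_top p
  induction k using Int.induction_on with
  | zero => rw [zpow_zero, zpow_zero]; exact hμ1
  | succ n ih =>
    rw [pg_meas_step μ, ih, ENNReal.zpow_add hpne hptop, zpow_one, mul_comm]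
  | pred n ih =>
    have h := pg_meas_step μ (-(n:ℤ) - 1)
    rw [show (-(n:ℤ) - 1 + 1) = -(n:ℤ) by ring, ih] at h
    have : (p : ℝ≥0∞)^(-(n:ℤ)) = p * (p : ℝ≥0∞)^(-(n:ℤ)-1) := by
      conv_lhs => rw [show (-(n:ℤ)) = 1 + (-(n:ℤ)-1) by ring]
      rw [ENNReal.zpow_add hpne hptop, zpow_one]
    rw [this] at h
    exact ((ENNReal.mul_right_inj hpne hptop).1 h).symm

theorem pg_heatK_eq (hμ1 : μ (closedBall 0 1) = 1) {α : ℝ} (hα : 0 < α)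
    (ν : ℝ → Measure ℝ)
    (hν : ∀ t : ℝ, 0 < t → ∀ a b : ℝ, a ≤ b →
      ν t (Set.Ico a b) =
        ENNReal.ofReal (padicSigma p α b ^ t - padicSigma p α a ^ t))
    {t : ℝ} (ht : 0 < t) {x y : ℚ_[p]} (hxy : x ≠ y) :
    padicHeatK p μ ν t x y
      = ∑' n : ℕ, ((p:ℝ≥0∞)^(-(x-y).valuation + (n:ℤ)))⁻¹ *
          ENNReal.ofReal (Real.exp (-(pgSfun p α (-(x-y).valuation + (n:ℤ) + 1) * t))
            - Real.exp (-(pgSfun p α (-(x-y).valuation + (n:ℤ)) * t))) := by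
  have hp1 : (1:ℝ) < p := by exact_mod_cast hp.out.one_lt
  set K : ℤ := -(x-y).valuation with hK
  have hm : ‖x - y‖ = (p:ℝ)^K := Padic.norm_eq_zpow_neg_valuation (sub_ne_zero.2 hxy)
  rw [padicHeatK, hm, pg_Ici_cover K]
  rw [lintegral_iUnion (fun n => measurableSet_Ico)]
  · congr 1
    ext n
    have step : ∫⁻ r in Set.Ico ((p:ℝ)^(K + (n:ℤ))) ((p:ℝ)^(K + (n:ℤ) + 1)),
        (μ (closedBall x r))⁻¹ ∂(ν t)
        = ∫⁻ _ in Set.Ico ((p:ℝ)^(K + (n:ℤ))) ((p:ℝ)^(K + (n:ℤ) + 1)),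
            ((p:ℝ≥0∞)^(K + (n:ℤ)))⁻¹ ∂(ν t) := by
      apply setLIntegral_congr_fun measurableSet_Ico
      rintro r ⟨h1, h2⟩
      dsimp only
      rw [pg_cball_eq x (K + n) r h1 h2, pg_meas_cball_eq μ, pg_meas_cball_val μ hμ1]
    rw [step, setLIntegral_const, hν t ht _ _
      (le_of_lt (zpow_lt_zpow_right₀ hp1 (by omega))), pg_sigma_rpow, pg_sigma_rpow]
  · intro i j hij
    have key : ∀ i j : ℕ, i < j → Disjoint (Set.Ico ((p:ℝ)^(K + (i:ℤ))) ((p:ℝ)^(K + (i:ℤ) + 1)))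
        (Set.Ico ((p:ℝ)^(K + (j:ℤ))) ((p:ℝ)^(K + (j:ℤ) + 1))) := by
      intro i j h
      rw [Set.Ico_disjoint_Ico]
      refine le_trans (min_le_left _ _) (le_trans ?_ (le_max_right _ _))
      exact zpow_le_zpow_right₀ hp1.le (by omega)
    rcases lt_or_gt_of_ne hij with h | h
    · exact key i j h
    · exact (key j i h).symm

theorem pg_green_eq (hμ1 : μ (closedBall 0 1) = 1) {α : ℝ} (hα : 0 < α)
    (ν : ℝ → Measure ℝ)
    (hν : ∀ t : ℝ, 0 < t → ∀ a b : ℝ, a ≤ b →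
      ν t (Set.Ico a b) =
        ENNReal.ofReal (padicSigma p α b ^ t - padicSigma p α a ^ t))
    {x y : ℚ_[p]} (hxy : x ≠ y) :
    padicGreen p μ ν x y
      = ∑' n : ℕ, ENNReal.ofReal ((1 - (p:ℝ)^(-α)) *
          (p:ℝ)^(((-(x-y).valuation : ℤ):ℝ)*(α-1)) * ((p:ℝ)^(α-1))^n) := by
  have hq0 : (0:ℝ) < p := by exact_mod_cast hp.out.pos
  set K : ℤ := -(x-y).valuation with hK
  rw [padicGreen]
  rw [setLIntegral_congr_fun measurableSet_Ioi
    (fun t (ht : t ∈ Set.Ioi (0:ℝ)) =>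
      pg_heatK_eq μ hμ1 hα ν hν ht hxy)]
  rw [lintegral_tsum]
  · congr 1
    ext n
    rw [lintegral_const_mul' _ _ (by
      simp only [ne_eq, ENNReal.inv_eq_top]
      intro h
      exact absurd h (ENNReal.zpow_pos (by exact_mod_cast hp.out.ne_zero)
        (ENNReal.natCast_ne_top p) _).ne')]
    rw [pg_lint_exp_diff (pg_Sfun_pos α _) (le_of_lt (pg_Sfun_lt (p := p) hα (K + (n:ℤ))))]
    rw [pg_enn_zpow, ← ENNReal.ofReal_inv_of_pos (zpow_pos hq0 _),
      ← ENNReal.ofReal_mul (by positivity), ← zpow_neg]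
    rw [pg_real_term hα K n]
  · intro n
    apply AEMeasurable.const_mul
    apply Measurable.aemeasurable
    fun_prop

end meas
end PGAux

theorem statement_19 (p : ℕ) [Fact p.Prime]
    [MeasurableSpace ℚ_[p]] [BorelSpace ℚ_[p]]
    (μ : Measure ℚ_[p]) [μ.IsAddHaarMeasure]
    (hμ1 : μ (closedBall 0 1) = 1)
    (α : ℝ) (hα : 0 < α)
    (ν : ℝ → Measure ℝ)
    (hν : ∀ t : ℝ, 0 < t → ∀ a b : ℝ, a ≤ b →
      ν t (Set.Ico a b) =
        ENNReal.ofReal (padicSigma p α b ^ t - padicSigma p α a ^ t)) :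
    ((∃ x y : ℚ_[p], x ≠ y ∧ padicGreen p μ ν x y < ⊤) ↔ α < 1) ∧
    ((∀ x y : ℚ_[p], x ≠ y → padicGreen p μ ν x y < ⊤) ↔ α < 1) ∧
    (α < 1 → ∀ x y : ℚ_[p], x ≠ y →
      padicGreen p μ ν x y =
        ENNReal.ofReal ((1 - (p : ℝ) ^ (-α)) / (1 - (p : ℝ) ^ (α - 1)) *
          ‖x - y‖ ^ (α - 1))) := by
  have hp1 : (1:ℝ) < p := by exact_mod_cast (Fact.out : p.Prime).one_lt
  have hq0 : (0:ℝ) < p := by linarith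
  -- the formula in the case α < 1
  have hfin : α < 1 → ∀ x y : ℚ_[p], x ≠ y →
      padicGreen p μ ν x y =
        ENNReal.ofReal ((1 - (p : ℝ) ^ (-α)) / (1 - (p : ℝ) ^ (α - 1)) *
          ‖x - y‖ ^ (α - 1)) := by
    intro hα1 x y hxy
    set K : ℤ := -(x-y).valuation with hK
    have hm : ‖x - y‖ = (p:ℝ)^K := Padic.norm_eq_zpow_neg_valuation (sub_ne_zero.2 hxy)
    have hqlt : (p:ℝ) ^ (α - 1) < 1 :=
      Real.rpow_lt_one_of_one_lt_of_neg hp1 (by linarith)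
    have hqnn : (0:ℝ) ≤ (p:ℝ) ^ (α - 1) := (Real.rpow_pos_of_pos hq0 _).le
    have hCnn : (0:ℝ) ≤ (1 - (p:ℝ)^(-α)) * (p:ℝ)^((K:ℝ)*(α-1)) := by
      have : (p:ℝ)^(-α) < 1 := Real.rpow_lt_one_of_one_lt_of_neg hp1 (by linarith)
      have := Real.rpow_pos_of_pos hq0 ((K:ℝ)*(α-1))
      nlinarith
    rw [pg_green_eq μ hμ1 hα ν hν hxy]
    rw [← ENNReal.ofReal_tsum_of_nonneg (fun n => by positivity)
      (((summable_geometric_of_lt_one hqnn hqlt).mul_left _))]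
    congr 1
    rw [tsum_mul_left, tsum_geometric_of_lt_one hqnn hqlt]
    rw [hm, ← Real.rpow_intCast (p:ℝ) K, ← Real.rpow_mul hq0.le]
    rw [div_eq_mul_inv]
    ring
  -- infinite in the case 1 ≤ α
  have hinf : 1 ≤ α → ∀ x y : ℚ_[p], x ≠ y → padicGreen p μ ν x y = ⊤ := by
    intro hα1 x y hxy
    set K : ℤ := -(x-y).valuation with hK
    rw [pg_green_eq μ hμ1 hα ν hν hxy]
    have hC : 0 < (1 - (p:ℝ)^(-α)) * (p:ℝ)^((K:ℝ)*(α-1)) := by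
      have h1 : (p:ℝ)^(-α) < 1 := Real.rpow_lt_one_of_one_lt_of_neg hp1 (by linarith)
      have h2 := Real.rpow_pos_of_pos hq0 ((K:ℝ)*(α-1))
      nlinarith
    have hq1 : (1:ℝ) ≤ (p:ℝ) ^ (α - 1) := by
      have := Real.rpow_le_rpow_of_exponent_le hp1.le (show (0:ℝ) ≤ α - 1 by linarith)
      rwa [Real.rpow_zero] at this
    rw [eq_top_iff]
    calc (⊤:ℝ≥0∞) = ∑' _ : ℕ, ENNReal.ofReal ((1 - (p:ℝ)^(-α)) * (p:ℝ)^((K:ℝ)*(α-1))) :=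
          (ENNReal.tsum_const_eq_top_of_ne_zero (by
            simp only [ne_eq, ENNReal.ofReal_eq_zero, not_le]
            exact hC)).symm
      _ ≤ _ := by
          apply ENNReal.tsum_le_tsum
          intro n
          apply ENNReal.ofReal_le_ofReal
          calc (1 - (p:ℝ)^(-α)) * (p:ℝ)^((K:ℝ)*(α-1))
              = (1 - (p:ℝ)^(-α)) * (p:ℝ)^((K:ℝ)*(α-1)) * 1 := (mul_one _).symm
            _ ≤ (1 - (p:ℝ)^(-α)) * (p:ℝ)^((K:ℝ)*(α-1)) * ((p:ℝ)^(α-1))^n := by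
                apply mul_le_mul_of_nonneg_left (one_le_pow₀ hq1) hC.le
  refine ⟨⟨?_, ?_⟩, ⟨?_, ?_⟩, hfin⟩
  · rintro ⟨x, y, hxy, hlt⟩
    by_contra hc
    push_neg at hc
    rw [hinf hc x y hxy] at hlt
    exact absurd hlt (lt_irrefl ⊤)
  · intro hα1
    refine ⟨0, 1, zero_ne_one, ?_⟩
    rw [hfin hα1 0 1 zero_ne_one]
    exact ENNReal.ofReal_lt_top
  · intro h
    by_contra hc
    push_neg at hc
    have := h 0 1 zero_ne_one
    rw [hinf hc 0 1 zero_ne_one] at this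
    exact absurd this (lt_irrefl ⊤)
  · intro hα1 x y hxy
    rw [hfin hα1 x y hxy]
    exact ENNReal.ofReal_lt_top
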